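/- Let (X,G) be a Cantor dynamical system such that for every nonempty clopen set A there is a point x ∈ A whose G-orbit intersects A in at least two points. Then the full group [G] has many involutions: for every nonempty regular open set A there is an involution π ∈ [G] with π ≠ id and spr(π) ⊆ A. -/

import Mathlib

open Set

variable {X : Type*} [TopologicalSpace X]

noncomputable instance Homeomorph.instGroup_1 : Group (X ≃ₜ X) where
  mul f g := g.trans f
  one := Homeomorph.refl X
  inv := Homeomorph.symm
  mul_assoc _ _ _ := Homeomorph.ext fun _ => rfl
  one_mul _ := Homeomorph.ext fun _ => rfl
  mul_one _ := Homeomorph.ext fun _ => rfl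
  inv_mul_cancel f := Homeomorph.ext fun x => f.symm_apply_apply x

@[simp] theorem Homeomorph.mul_apply' (f g : X ≃ₜ X) (x : X) : (f * g) x = f (g x) := rfl
@[simp] theorem Homeomorph.one_apply' (x : X) : (1 : X ≃ₜ X) x = x := rfl

/-- The support of a homeomorphism. -/
def spr (γ : X ≃ₜ X) : Set X := interior (closure {x | γ x ≠ x})

/-- The orbit of a point under a subgroup of homeomorphisms. -/
def orbitOf (G : Subgroup (X ≃ₜ X)) (x : X) : Set X := {y | ∃ g ∈ G, (g : X ≃ₜ X) x = y}

/-- The full group of a Cantor dynamical system. -/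
def fullGroup (G : Subgroup (X ≃ₜ X)) : Subgroup (X ≃ₜ X) where
  carrier := {γ | ∀ x, γ x ∈ orbitOf G x}
  one_mem' x := ⟨1, G.one_mem, rfl⟩
  mul_mem' {a b} ha hb x := by
    obtain ⟨h, hh, hbx⟩ := hb x
    obtain ⟨g, hg, hax⟩ := ha (b x)
    exact ⟨g * h, G.mul_mem hg hh, by simp only [Homeomorph.mul_apply'] at *; rw [hbx, hax]⟩
  inv_mem' {a} ha := by
    intro x
    obtain ⟨g, hg, hax⟩ := ha (a⁻¹ x)
    refine ⟨g⁻¹, G.inv_mem hg, ?_⟩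
    have : a (a⁻¹ x) = x := a.apply_symm_apply x
    rw [this] at hax
    have : (g⁻¹ : X ≃ₜ X) (g (a⁻¹ x)) = a⁻¹ x := g.symm_apply_apply _
    rw [hax] at this
    exact this


/-- If every nonempty clopen set contains a point whose orbit meets it twice, the full group
has many involutions. -/
theorem fullGroup_many_involutions {X : Type*} [TopologicalSpace X] [CompactSpace X] [TopologicalSpace.MetrizableSpace X] [TotallyDisconnectedSpace X] [PerfectSpace X] [Nonempty X]
    (G : Subgroup (X ≃ₜ X))
    (h : ∀ A : Set X, IsClopen A → A.Nonempty →
      ∃ x ∈ A, ∃ g ∈ G, (g : X ≃ₜ X) x ∈ A ∧ (g : X ≃ₜ X) x ≠ x) :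
    ∀ A : Set X, A = interior (closure A) → A.Nonempty →
      ∃ π ∈ fullGroup G, π * π = 1 ∧ π ≠ 1 ∧ spr π ⊆ A := by
  intro A hA hAne
  have hAopen : IsOpen A := hA ▸ isOpen_interior
  -- find a clopen set U inside A
  obtain ⟨a, ha⟩ := hAne
  obtain ⟨U, hUclopen, haU, hUA⟩ := compact_exists_isClopen_in_isOpen hAopen ha
  obtain ⟨x, hxU, g, hgG, hgxU, hgxx⟩ := h U hUclopen ⟨a, haU⟩
  -- separate x and g x
  obtain ⟨O1, O2, hO1, hO2, hxO1, hgxO2, hO12⟩ := t2_separation hgxx.symm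
  -- clopen V ∋ x inside U ∩ g⁻¹(U ∩ O2) ∩ O1
  have hWopen : IsOpen (U ∩ (g : X ≃ₜ X) ⁻¹' (U ∩ O2) ∩ O1) :=
    ((hUclopen.2.inter ((hUclopen.2.inter hO2).preimage (g : X ≃ₜ X).continuous)).inter hO1)
  have hxW : x ∈ U ∩ (g : X ≃ₜ X) ⁻¹' (U ∩ O2) ∩ O1 :=
    ⟨⟨hxU, hgxU, hgxO2⟩, hxO1⟩
  obtain ⟨V, hVclopen, hxV, hVW⟩ := compact_exists_isClopen_in_isOpen hWopen hxW
  set γ : X ≃ₜ X := g with hγ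
  have hVU : V ⊆ U := fun y hy => (hVW hy).1.1
  have hgVU : ∀ y ∈ V, γ y ∈ U := fun y hy => (hVW hy).1.2.1
  have hVO1 : V ⊆ O1 := fun y hy => (hVW hy).2
  have hgVO2 : ∀ y ∈ V, γ y ∈ O2 := fun y hy => (hVW hy).1.2.2
  -- W := γ '' V, as preimage of V under γ⁻¹ = γ.symm
  have hdisj : ∀ y ∈ V, γ y ∉ V := by
    intro y hy hmem
    exact (Set.disjoint_left.mp hO12 (hVO1 hmem)) (hgVO2 y hy)
  -- define the swap function
  classical
  set f : X → X := fun y => if y ∈ V then γ y else if γ.symm y ∈ V then γ.symm y else y with hf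
  have hfV : ∀ y, y ∈ V → f y = γ y := by
    intro y hy; show (if y ∈ V then γ y else _) = γ y; rw [if_pos hy]
  have hfW : ∀ y, y ∉ V → γ.symm y ∈ V → f y = γ.symm y := by
    intro y hy hy2
    show (if y ∈ V then γ y else if γ.symm y ∈ V then γ.symm y else y) = γ.symm y
    rw [if_neg hy, if_pos hy2]
  have hfZ : ∀ y, y ∉ V → γ.symm y ∉ V → f y = y := by
    intro y hy hy2
    show (if y ∈ V then γ y else if γ.symm y ∈ V then γ.symm y else y) = y
    rw [if_neg hy, if_neg hy2]
  have hff : ∀ y, f (f y) = y := by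
    intro y
    by_cases hy : y ∈ V
    · rw [hfV y hy, hfW (γ y) (hdisj y hy) (by rw [γ.symm_apply_apply]; exact hy),
        γ.symm_apply_apply]
    · by_cases hy2 : γ.symm y ∈ V
      · rw [hfW y hy hy2, hfV _ hy2, γ.apply_symm_apply]
      · rw [hfZ y hy hy2, hfZ y hy hy2]
  have hfcont : Continuous f := by
    rw [continuous_iff_continuousAt]
    intro y
    by_cases hy : y ∈ V
    · have : f =ᶠ[nhds y] (γ : X → X) := by
        filter_upwards [hVclopen.2.mem_nhds hy] with z hz
        exact hfV z hz
      exact γ.continuous.continuousAt.congr this.symm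
    · by_cases hy2 : γ.symm y ∈ V
      · have hop : IsOpen ((γ.symm : X → X) ⁻¹' V \ V) :=
          (hVclopen.2.preimage γ.symm.continuous).sdiff hVclopen.1
        have : f =ᶠ[nhds y] (γ.symm : X → X) := by
          filter_upwards [hop.mem_nhds ⟨hy2, hy⟩] with z hz
          exact hfW z hz.2 hz.1
        exact γ.symm.continuous.continuousAt.congr this.symm
      · have hop : IsOpen ((V ∪ (γ.symm : X → X) ⁻¹' V)ᶜ) :=
          (hVclopen.1.union ((hVclopen.isClosed).preimage γ.symm.continuous)).isOpen_compl
        have : f =ᶠ[nhds y] id := by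
          filter_upwards [hop.mem_nhds (by simp [hy, hy2])] with z hz
          simp only [Set.mem_compl_iff, Set.mem_union] at hz
          push_neg at hz
          exact hfZ z hz.1 hz.2
        exact continuous_id.continuousAt.congr this.symm
  set π : X ≃ₜ X := ⟨⟨f, f, hff, hff⟩, hfcont, hfcont⟩ with hπ
  have hπapply : ∀ y, π y = f y := fun _ => rfl
  refine ⟨π, ?_, ?_, ?_, ?_⟩
  · -- membership in full group
    intro y
    by_cases hy : y ∈ V
    · exact ⟨γ, hgG, by simp [hπapply, hf, if_pos hy]⟩
    · by_cases hy2 : γ.symm y ∈ V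
      · exact ⟨γ⁻¹, G.inv_mem hgG, by simp [hπapply, hf, if_neg hy, if_pos hy2]⟩
      · exact ⟨1, G.one_mem, by simp [hπapply, hf, if_neg hy, if_neg hy2]⟩
  · exact Homeomorph.ext fun y => hff y
  · intro heq
    have := congrArg (fun (φ : X ≃ₜ X) => φ x) heq
    simp only [hπapply, Homeomorph.one_apply'] at this
    rw [hf] at this
    simp only [if_pos hxV] at this
    exact hgxx this
  · -- support
    have hsub : {y | π y ≠ y} ⊆ U := by
      intro y hy
      simp only [Set.mem_setOf_eq, hπapply, hf] at hy
      by_cases h1 : y ∈ V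
      · exact hVU h1
      · by_cases h2 : γ.symm y ∈ V
        · simp only [if_neg h1, if_pos h2] at hy
          have := hgVU _ h2
          rwa [γ.apply_symm_apply] at this
        · simp [if_neg h1, if_neg h2] at hy
    calc spr π ⊆ interior (closure U) := by
          apply interior_mono; exact closure_mono hsub
      _ ⊆ closure U := interior_subset
      _ = U := hUclopen.isClosed.closure_eq
      _ ⊆ A := hUA
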